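/- Let V and W be vector spaces over ℂ, let T : V → V and S : W → W be ℂ-linear maps, and let m : V × V → W be a ℂ-bilinear map such that m(T v₁, T v₂) = S(m(v₁, v₂)) for all v₁, v₂ ∈ V. Assume: (i) m(v₁, v₂) ≠ 0 whenever v₁ ≠ 0 and v₂ ≠ 0; and (ii) S has no nonzero fixed vector, i.e. S w = w implies w = 0. Then for every ζ ∈ ℂ with |ζ| = 1, it is impossible that both ζ and its complex conjugate ζ̄ are eigenvalues of T; that is, there do not exist nonzero vectors v₁, v₂ ∈ V with T v₁ = ζ·v₁ and T v₂ = ζ̄·v₂. In particular, neither 1 nor −1 is an eigenvalue of T. -/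

import Mathlib

/-- Linear-algebra core of the lemma that the spectrum of `φ̃*` on `H⁰(L)` is
disjoint from its conjugate: given a bilinear map `m` intertwining `T` and `S`,
with `m` nonvanishing on pairs of nonzero vectors and `S` having no nonzero fixed
vector, no unit complex number `ζ` and its conjugate are both eigenvalues of `T`;
in particular neither `1` nor `-1` is an eigenvalue of `T`. -/
theorem no_conjugate_pair_of_eigenvalues
    (V W : Type*) [AddCommGroup V] [Module ℂ V] [AddCommGroup W] [Module ℂ W]
    (T : V →ₗ[ℂ] V) (S : W →ₗ[ℂ] W) (m : V →ₗ[ℂ] V →ₗ[ℂ] W)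
    (hcompat : ∀ v₁ v₂ : V, m (T v₁) (T v₂) = S (m v₁ v₂))
    (hnz : ∀ v₁ v₂ : V, v₁ ≠ 0 → v₂ ≠ 0 → m v₁ v₂ ≠ 0)
    (hfix : ∀ w : W, S w = w → w = 0) :
    (∀ ζ : ℂ, ‖ζ‖ = 1 →
      ¬∃ v₁ v₂ : V, v₁ ≠ 0 ∧ v₂ ≠ 0 ∧ T v₁ = ζ • v₁ ∧
        T v₂ = (starRingEnd ℂ) ζ • v₂) ∧
    ¬Module.End.HasEigenvalue T 1 ∧ ¬Module.End.HasEigenvalue T (-1) := by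
  have key : ∀ ζ : ℂ, ‖ζ‖ = 1 →
      ¬∃ v₁ v₂ : V, v₁ ≠ 0 ∧ v₂ ≠ 0 ∧ T v₁ = ζ • v₁ ∧
        T v₂ = (starRingEnd ℂ) ζ • v₂ := by
    rintro ζ hζ ⟨v₁, v₂, h1, h2, hT1, hT2⟩
    have hmul : ζ * (starRingEnd ℂ) ζ = 1 := by
      rw [Complex.mul_conj]
      norm_cast
      simp [Complex.normSq_eq_norm_sq, hζ]
    have hS : S (m v₁ v₂) = m v₁ v₂ := by
      rw [← hcompat, hT1, hT2]
      simp only [map_smul, LinearMap.smul_apply, smul_smul]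
      rw [mul_comm, hmul, one_smul]
    exact hnz v₁ v₂ h1 h2 (hfix _ hS)
  refine ⟨key, ?_, ?_⟩
  · intro h
    obtain ⟨v, hv, hv0⟩ := h.exists_hasEigenvector
    exact key 1 (by simp) ⟨v, v, hv0, hv0, by simpa using hv, by simpa using hv⟩
  · intro h
    obtain ⟨v, hv, hv0⟩ := h.exists_hasEigenvector
    exact key (-1) (by simp) ⟨v, v, hv0, hv0, by simpa using hv, by simpa using hv⟩
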